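/- Isometric embedding of the hyperbolic cusp: for x ∈ ℝ and y > 1/(2π), define F(x,y) ∈ ℝ³ by F(x,y) = ( (1/(2πy))·sin 2πx, (1/(2πy))·cos 2πx, log(2πy + √(4π²y² − 1)) − √(1 − (2πy)^{−2}) ). Then the partial derivatives satisfy ‖∂F/∂x‖² = 1/y², ‖∂F/∂y‖² = 1/y², and ⟨∂F/∂x, ∂F/∂y⟩ = 0; that is, the pullback of the Euclidean metric of ℝ³ under F is the hyperbolic metric (dx² + dy²)/y² of curvature −1. -/

import Mathlib

/-- The isometric embedding of the hyperbolic cusp into Euclidean 3-space. -/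
noncomputable def cuspEmbed (x y : ℝ) : EuclideanSpace ℝ (Fin 3) :=
  (WithLp.equiv 2 (Fin 3 → ℝ)).symm
    ![(1 / (2 * Real.pi * y)) * Real.sin (2 * Real.pi * x),
      (1 / (2 * Real.pi * y)) * Real.cos (2 * Real.pi * x),
      Real.log (2 * Real.pi * y + Real.sqrt (4 * Real.pi ^ 2 * y ^ 2 - 1)) -
        Real.sqrt (1 - ((2 * Real.pi * y)⁻¹) ^ 2)]

/-- Auxiliary: `HasDerivAt` into `EuclideanSpace ℝ (Fin 3)` from componentwise derivatives. -/
theorem hasDerivAt_euclidean3 {f : ℝ → Fin 3 → ℝ} {f' : Fin 3 → ℝ} {t : ℝ}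
    (h : HasDerivAt f f' t) :
    HasDerivAt (fun t' => (WithLp.equiv 2 (Fin 3 → ℝ)).symm (f t'))
      ((WithLp.equiv 2 (Fin 3 → ℝ)).symm f') t :=
  ((PiLp.continuousLinearEquiv 2 ℝ (fun _ : Fin 3 => ℝ)).symm.toContinuousLinearMap.hasFDerivAt.comp_hasDerivAt t h :)

/-- The pullback of the Euclidean metric under `cuspEmbed` is the hyperbolic metric
`(dx² + dy²)/y²`: `‖∂F/∂x‖² = ‖∂F/∂y‖² = 1/y²` and `⟨∂F/∂x, ∂F/∂y⟩ = 0`. -/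
theorem cusp_embedding_isometric (x y : ℝ) (hy : 1 / (2 * Real.pi) < y) :
    ∃ Fx Fy : EuclideanSpace ℝ (Fin 3),
      HasDerivAt (fun x' : ℝ => cuspEmbed x' y) Fx x ∧
      HasDerivAt (fun y' : ℝ => cuspEmbed x y') Fy y ∧
      ‖Fx‖ ^ 2 = 1 / y ^ 2 ∧ ‖Fy‖ ^ 2 = 1 / y ^ 2 ∧ inner (𝕜 := ℝ) Fx Fy = 0 := by
  have hπ := Real.pi_pos
  have hy0 : 0 < y := lt_trans (by positivity) hy
  have hu : 1 < 2 * Real.pi * y := by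
    rw [div_lt_iff₀ (by positivity)] at hy; nlinarith
  have hu0 : (0:ℝ) < 2 * Real.pi * y := lt_trans one_pos hu
  have hApos : (0:ℝ) < 4 * Real.pi ^ 2 * y ^ 2 - 1 := by nlinarith
  set A := Real.sqrt (4 * Real.pi ^ 2 * y ^ 2 - 1) with hAdef
  have hA0 : 0 < A := Real.sqrt_pos.mpr hApos
  have hAsq : A ^ 2 = 4 * Real.pi ^ 2 * y ^ 2 - 1 := Real.sq_sqrt hApos.le
  have hB : Real.sqrt (1 - ((2 * Real.pi * y)⁻¹) ^ 2) = A / (2 * Real.pi * y) := by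
    have h1 : 1 - ((2 * Real.pi * y)⁻¹) ^ 2 = (A / (2 * Real.pi * y)) ^ 2 := by
      rw [div_pow, hAsq]; field_simp; ring
    rw [h1, Real.sqrt_sq (by positivity)]
  set s := Real.sin (2 * Real.pi * x) with hsdef
  set c := Real.cos (2 * Real.pi * x) with hcdef
  have hsc : s ^ 2 + c ^ 2 = 1 := Real.sin_sq_add_cos_sq _
  have hlin : HasDerivAt (fun x' : ℝ => 2 * Real.pi * x') (2 * Real.pi) x := by
    simpa using (hasDerivAt_id x).const_mul (2 * Real.pi)
  have hsin : HasDerivAt (fun x' : ℝ => Real.sin (2 * Real.pi * x')) (c * (2 * Real.pi)) x :=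
    (Real.hasDerivAt_sin (2 * Real.pi * x)).comp x hlin
  have hcos : HasDerivAt (fun x' : ℝ => Real.cos (2 * Real.pi * x')) (-s * (2 * Real.pi)) x :=
    (Real.hasDerivAt_cos (2 * Real.pi * x)).comp x hlin
  have hX0 : HasDerivAt (fun x' : ℝ => (1 / (2 * Real.pi * y)) * Real.sin (2 * Real.pi * x'))
      (c / y) x := by
    have := hsin.const_mul (1 / (2 * Real.pi * y))
    refine this.congr_deriv (Eq.symm ?_)
    field_simp
  have hX1 : HasDerivAt (fun x' : ℝ => (1 / (2 * Real.pi * y)) * Real.cos (2 * Real.pi * x'))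
      (-(s / y)) x := by
    have := hcos.const_mul (1 / (2 * Real.pi * y))
    refine this.congr_deriv (Eq.symm ?_)
    field_simp
  have hlinY : HasDerivAt (fun y' : ℝ => 2 * Real.pi * y') (2 * Real.pi) y := by
    simpa using (hasDerivAt_id y).const_mul (2 * Real.pi)
  have hinvY : HasDerivAt (fun y' : ℝ => (2 * Real.pi * y')⁻¹)
      (-(2 * Real.pi) / (2 * Real.pi * y) ^ 2) y := hlinY.inv hu0.ne'
  have hY0 : HasDerivAt (fun y' : ℝ => (1 / (2 * Real.pi * y')) * s)
      (-(2 * Real.pi * s / (2 * Real.pi * y) ^ 2)) y := by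
    simp only [one_div]
    have := hinvY.mul_const s
    refine this.congr_deriv (Eq.symm ?_)
    ring
  have hY1 : HasDerivAt (fun y' : ℝ => (1 / (2 * Real.pi * y')) * c)
      (-(2 * Real.pi * c / (2 * Real.pi * y) ^ 2)) y := by
    simp only [one_div]
    have := hinvY.mul_const c
    refine this.congr_deriv (Eq.symm ?_)
    ring
  have hY2 : HasDerivAt (fun y' : ℝ =>
      Real.log (2 * Real.pi * y' + Real.sqrt (4 * Real.pi ^ 2 * y' ^ 2 - 1)) -
        Real.sqrt (1 - ((2 * Real.pi * y')⁻¹) ^ 2))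
      (2 * Real.pi * A / (2 * Real.pi * y) ^ 2) y := by
    have hq : HasDerivAt (fun y' : ℝ => 4 * Real.pi ^ 2 * y' ^ 2 - 1)
        (4 * Real.pi ^ 2 * (2 * y)) y := by
      simpa using ((hasDerivAt_pow 2 y).const_mul (4 * Real.pi ^ 2)).sub_const 1
    have hsq : HasDerivAt (fun y' : ℝ => Real.sqrt (4 * Real.pi ^ 2 * y' ^ 2 - 1))
        (4 * Real.pi ^ 2 * (2 * y) / (2 * A)) y := hq.sqrt hApos.ne'
    have hlog : HasDerivAt (fun y' : ℝ =>
        Real.log (2 * Real.pi * y' + Real.sqrt (4 * Real.pi ^ 2 * y' ^ 2 - 1)))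
        ((2 * Real.pi + 4 * Real.pi ^ 2 * (2 * y) / (2 * A)) / (2 * Real.pi * y + A)) y :=
      (hlinY.add hsq).log (add_pos hu0 hA0).ne'
    have hlog' : HasDerivAt (fun y' : ℝ =>
        Real.log (2 * Real.pi * y' + Real.sqrt (4 * Real.pi ^ 2 * y' ^ 2 - 1)))
        (2 * Real.pi / A) y := by
      convert hlog using 1
      field_simp; ring
    have hw : HasDerivAt (fun y' : ℝ => 1 - ((2 * Real.pi * y')⁻¹) ^ 2)
        (-(2 * ((2 * Real.pi * y)⁻¹) ^ 1 * (-(2 * Real.pi) / (2 * Real.pi * y) ^ 2))) y :=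
      (hinvY.pow 2).const_sub 1
    have hw0 : 1 - ((2 * Real.pi * y)⁻¹) ^ 2 ≠ 0 := by
      rw [show 1 - ((2 * Real.pi * y)⁻¹) ^ 2 = (A / (2 * Real.pi * y)) ^ 2 by
        rw [div_pow, hAsq]; field_simp; ring]
      positivity
    have hsq2 : HasDerivAt (fun y' : ℝ => Real.sqrt (1 - ((2 * Real.pi * y')⁻¹) ^ 2))
        ((-(2 * ((2 * Real.pi * y)⁻¹) ^ 1 * (-(2 * Real.pi) / (2 * Real.pi * y) ^ 2))) /
          (2 * Real.sqrt (1 - ((2 * Real.pi * y)⁻¹) ^ 2))) y := hw.sqrt hw0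
    have hsq2' : HasDerivAt (fun y' : ℝ => Real.sqrt (1 - ((2 * Real.pi * y')⁻¹) ^ 2))
        (2 * Real.pi / (A * (2 * Real.pi * y) ^ 2)) y := by
      convert hsq2 using 1
      rw [hB]
      field_simp
    have := hlog'.sub hsq2'
    refine this.congr_deriv (Eq.symm ?_)
    rw [div_sub_div _ _ hA0.ne' (by positivity), div_eq_div_iff (by positivity) (by positivity)]
    linear_combination (2 * Real.pi * A * (2 * Real.pi * y) ^ 2) * hAsq
  have hDX : HasDerivAt (fun x' : ℝ => cuspEmbed x' y)
      ((WithLp.equiv 2 (Fin 3 → ℝ)).symm ![c / y, -(s / y), 0]) x := by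
    refine hasDerivAt_euclidean3 ?_
    rw [hasDerivAt_pi]
    intro i
    fin_cases i
    · simpa using hX0
    · simpa using hX1
    · simpa using hasDerivAt_const x _
  have hDY : HasDerivAt (fun y' : ℝ => cuspEmbed x y')
      ((WithLp.equiv 2 (Fin 3 → ℝ)).symm
        ![-(2 * Real.pi * s / (2 * Real.pi * y) ^ 2),
          -(2 * Real.pi * c / (2 * Real.pi * y) ^ 2),
          2 * Real.pi * A / (2 * Real.pi * y) ^ 2]) y := by
    refine hasDerivAt_euclidean3 ?_
    rw [hasDerivAt_pi]
    intro i
    fin_cases i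
    · simpa using hY0
    · simpa using hY1
    · simpa using hY2
  clear hY0 hY1 hY2 hX0 hX1 hsin hcos hlin hlinY hinvY hB
  clear_value A s c
  refine ⟨(WithLp.equiv 2 (Fin 3 → ℝ)).symm ![c / y, -(s / y), 0],
    (WithLp.equiv 2 (Fin 3 → ℝ)).symm
      ![-(2 * Real.pi * s / (2 * Real.pi * y) ^ 2),
        -(2 * Real.pi * c / (2 * Real.pi * y) ^ 2),
        2 * Real.pi * A / (2 * Real.pi * y) ^ 2], hDX, hDY, ?_, ?_, ?_⟩
  · rw [← real_inner_self_eq_norm_sq, PiLp.inner_apply]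
    simp [PiLp.inner_apply, Fin.sum_univ_three, PiLp.toLp_apply, -real_inner_self_eq_norm_sq]
    field_simp
    nlinarith [hsc]
  · rw [← real_inner_self_eq_norm_sq, PiLp.inner_apply]
    simp [PiLp.inner_apply, Fin.sum_univ_three, PiLp.toLp_apply, -real_inner_self_eq_norm_sq]
    field_simp
    nlinarith [hsc, hAsq]
  · simp [PiLp.inner_apply, Fin.sum_univ_three, PiLp.toLp_apply, -real_inner_self_eq_norm_sq]
    ring
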